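/- For the scalar ODE ẋ = −ρx − κ₁|x|^{γ₁} sgn(x) − κ₂|x|^{γ₂} sgn(x) with ρ, κ₁, κ₂ > 0, 0 < γ₁ < 1 < γ₂, and |x₀| < 1, the settling time satisfies T(x₀) ≤ (1/(ρ(1−γ₁))) ln(1 + (ρ/κ₁)|x₀|^{1−γ₁}). -/

import Mathlib

/-- Signed power `|y|^γ sgn(y)` appearing in the attracting laws. -/
noncomputable def spow (y γ : ℝ) : ℝ := |y| ^ γ * Real.sign y

theorem stmt_7 (ρ κ₁ κ₂ γ₁ γ₂ : ℝ)
    (hρ : 0 < ρ) (hκ₁ : 0 < κ₁) (hκ₂ : 0 < κ₂)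
    (hγ₁0 : 0 < γ₁) (hγ₁1 : γ₁ < 1) (hγ₂ : 1 < γ₂)
    (x : ℝ → ℝ) (x₀ : ℝ) (hx0 : x 0 = x₀) (hx₀ : |x₀| < 1)
    (hode : ∀ t, 0 ≤ t →
      HasDerivAt x (-ρ * x t - κ₁ * spow (x t) γ₁ - κ₂ * spow (x t) γ₂) t) :
    (∃ t, 0 ≤ t ∧ x t = 0) ∧
    sInf {t : ℝ | 0 ≤ t ∧ x t = 0} ≤
      1 / (ρ * (1 - γ₁)) * Real.log (1 + ρ / κ₁ * |x₀| ^ (1 - γ₁)) := by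
  have h1γ : (0:ℝ) < 1 - γ₁ := by linarith
  set c : ℝ := (1 - γ₁) / 2 with hc
  have hc0 : 0 < c := by positivity
  have h2c : 2 * c = 1 - γ₁ := by rw [hc]; ring
  set A : ℝ := 1 + ρ / κ₁ * |x₀| ^ (1 - γ₁) with hA
  have hA1 : 1 ≤ A := by
    have : 0 ≤ ρ / κ₁ * |x₀| ^ (1 - γ₁) := by positivity
    rw [hA]; linarith
  have hA0 : 0 < A := by linarith
  set T : ℝ := 1 / (ρ * (1 - γ₁)) * Real.log A with hT
  have hT0 : 0 ≤ T := mul_nonneg (by positivity) (Real.log_nonneg hA1)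
  have habs : ∀ y : ℝ, ((y:ℝ)^2) ^ c = |y| ^ (1 - γ₁) := by
    intro y
    rw [← sq_abs y, ← Real.rpow_natCast |y| 2, ← Real.rpow_mul (abs_nonneg y),
      show ((2:ℕ):ℝ) * c = 1 - γ₁ by push_cast [hc]; ring]
  have hsgnmul : ∀ y : ℝ, Real.sign y * |y| = y := by
    intro y
    rcases lt_trichotomy y 0 with h|h|h <;>
      simp [Real.sign_of_neg, Real.sign_of_pos, abs_of_neg, abs_of_pos, h]
  have hex : ∃ t ∈ Set.Icc (0:ℝ) T, x t = 0 := by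
    by_contra hcon
    push_neg at hcon
    set g : ℝ → ℝ := fun t => ((x t ^ 2) ^ c + κ₁ / ρ) * Real.exp (ρ * (1 - γ₁) * t)
      with hg
    have hxc : ContinuousOn x (Set.Icc 0 T) := fun t ht =>
      (hode t ht.1).continuousAt.continuousWithinAt
    have hgc : ContinuousOn g (Set.Icc 0 T) := by
      apply ContinuousOn.mul
      · exact (((hxc.pow 2).rpow_const (fun t _ => Or.inr hc0.le)).add continuousOn_const)
      · exact (Real.continuous_exp.comp (continuous_const.mul continuous_id)).continuousOn
    have hderiv : ∀ t ∈ interior (Set.Icc (0:ℝ) T), HasDerivAt g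
        (c * (x t ^ 2) ^ (c - 1) *
            (2 * x t * (-ρ * x t - κ₁ * spow (x t) γ₁ - κ₂ * spow (x t) γ₂)) *
            Real.exp (ρ * (1 - γ₁) * t)
          + ((x t ^ 2) ^ c + κ₁ / ρ) * (Real.exp (ρ * (1 - γ₁) * t) * (ρ * (1 - γ₁)))) t := by
      intro t ht
      rw [interior_Icc] at ht
      have hxt0 : x t ≠ 0 := hcon t ⟨ht.1.le, ht.2.le⟩
      have hx' := hode t ht.1.le
      have hsq : HasDerivAt (fun t => x t ^ 2)
          (2 * x t * (-ρ * x t - κ₁ * spow (x t) γ₁ - κ₂ * spow (x t) γ₂)) t := by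
        have := hx'.fun_pow 2
        norm_num at this
        exact this.congr_deriv (by ring)
      have hrpow : HasDerivAt (fun y : ℝ => y ^ c) (c * (x t ^ 2) ^ (c - 1)) (x t ^ 2) :=
        Real.hasDerivAt_rpow_const (Or.inl (pow_ne_zero _ hxt0))
      have h1 := (hrpow.comp t hsq).add_const (κ₁ / ρ)
      have hlin : HasDerivAt (fun t : ℝ => ρ * (1 - γ₁) * t) (ρ * (1 - γ₁)) t := by
        simpa using (hasDerivAt_id t).const_mul (ρ * (1 - γ₁))
      have hexp := hlin.exp
      have := h1.mul hexp
      exact this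
    have hdnp : ∀ t ∈ interior (Set.Icc (0:ℝ) T), deriv g t ≤ 0 := by
      intro t ht
      rw [(hderiv t ht).deriv]
      rw [interior_Icc] at ht
      have hxt0 : x t ≠ 0 := hcon t ⟨ht.1.le, ht.2.le⟩
      set a : ℝ := |x t| with ha
      have ha0 : 0 < a := abs_pos.mpr hxt0
      set s : ℝ := Real.sign (x t) with hs
      have hss : s * s = 1 := by
        rcases Real.sign_apply_eq_of_ne_zero (x t) hxt0 with h|h <;> rw [← hs] at h <;>
          rw [h] <;> norm_num
      have hsa : s * a = x t := hsgnmul (x t)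
      set E : ℝ := Real.exp (ρ * (1 - γ₁) * t) with hE
      have hE0 : 0 < E := Real.exp_pos _
      have haa : a * a = a ^ (2:ℝ) := by
        rw [show (2:ℝ) = ((2:ℕ):ℝ) by norm_num, Real.rpow_natCast]
        ring
      have r0 : x t ^ 2 = a ^ (2:ℝ) := by
        rw [← haa, ← hsa]
        nlinarith [hss]
      have hxv : x t * (-ρ * x t - κ₁ * spow (x t) γ₁ - κ₂ * spow (x t) γ₂)
          = -(ρ * (a * a) + κ₁ * a ^ (1 + γ₁) + κ₂ * a ^ (1 + γ₂)) := by
        have e1 : a ^ (1 + γ₁) = a * a ^ γ₁ := by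
          rw [Real.rpow_add ha0, Real.rpow_one]
        have e2 : a ^ (1 + γ₂) = a * a ^ γ₂ := by
          rw [Real.rpow_add ha0, Real.rpow_one]
        simp only [spow, ← hs, ← ha]
        rw [← hsa, e1, e2]
        linear_combination (-(ρ * (a*a) + κ₁ * (a * a ^ γ₁) + κ₂ * (a * a ^ γ₂))) * hss
      have r1 : (a ^ (2:ℝ)) ^ (c - 1) = a ^ (2*c - 2) := by
        rw [← Real.rpow_mul ha0.le]; congr 1; ring
      have r2 : (a ^ (2:ℝ)) ^ c = a ^ (2*c) := by
        rw [← Real.rpow_mul ha0.le]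
      have m1 : a ^ (2*c - 2) * (a * a) = a ^ (2*c) := by
        rw [haa, ← Real.rpow_add ha0]; congr 1; ring
      have m2 : a ^ (2*c - 2) * a ^ (1 + γ₁) = 1 := by
        rw [← Real.rpow_add ha0, show 2*c - 2 + (1 + γ₁) = 0 by rw [hc]; ring,
          Real.rpow_zero]
      have m3 : a ^ (2*c - 2) * a ^ (1 + γ₂) = a ^ (γ₂ - γ₁) := by
        rw [← Real.rpow_add ha0]; congr 1; rw [hc]; ring
      have key : c * (x t ^ 2) ^ (c - 1) *
            (2 * x t * (-ρ * x t - κ₁ * spow (x t) γ₁ - κ₂ * spow (x t) γ₂)) * E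
          + ((x t ^ 2) ^ c + κ₁ / ρ) * (E * (ρ * (1 - γ₁)))
          = -(2 * c * κ₂ * a ^ (γ₂ - γ₁) * E) := by
        rw [r0, r1, r2, ← h2c]
        linear_combination (2*c*E*(a ^ (2*c-2))) * hxv - (2*c*E*ρ) * m1
          - (2*c*E*κ₁) * m2 - (2*c*E*κ₂) * m3
          + (κ₁*E*(1-γ₁)) * mul_inv_cancel₀ (ne_of_gt hρ)
      rw [key]
      have : 0 < 2 * c * κ₂ * a ^ (γ₂ - γ₁) * E := by positivity
      linarith
    have hdiff : DifferentiableOn ℝ g (interior (Set.Icc (0:ℝ) T)) := fun t ht =>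
      ((hderiv t ht).differentiableAt).differentiableWithinAt
    have hanti : AntitoneOn g (Set.Icc 0 T) :=
      antitoneOn_of_deriv_nonpos (convex_Icc 0 T) hgc hdiff hdnp
    have hle : g T ≤ g 0 :=
      hanti (Set.left_mem_Icc.mpr hT0) (Set.right_mem_Icc.mpr hT0) hT0
    have hg0 : g 0 = |x₀| ^ (1 - γ₁) + κ₁ / ρ := by
      rw [hg]
      simp [hx0, habs x₀]
    have hexpT : Real.exp (ρ * (1 - γ₁) * T) = A := by
      rw [hT]
      have hne : ρ * (1 - γ₁) ≠ 0 := by positivity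
      rw [show ρ * (1 - γ₁) * (1 / (ρ * (1 - γ₁)) * Real.log A)
            = Real.log A by field_simp]
      exact Real.exp_log hA0
    have hxT : x T ≠ 0 := hcon T ⟨hT0, le_refl T⟩
    have hxTpos : 0 < (x T ^ 2) ^ c := Real.rpow_pos_of_pos (by positivity) _
    have hgT : κ₁ / ρ * A < g T := by
      have hgTval : g T = ((x T ^ 2) ^ c + κ₁ / ρ) * A := by
        rw [hg]; simp only; rw [hexpT]
      rw [hgTval]
      have h1 : κ₁ / ρ < (x T ^ 2) ^ c + κ₁ / ρ := by linarith
      exact mul_lt_mul_of_pos_right h1 hA0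
    have hAval : κ₁ / ρ * A = κ₁ / ρ + |x₀| ^ (1 - γ₁) := by
      rw [hA]
      field_simp
    rw [hg0] at hle
    rw [hAval] at hgT
    linarith
  obtain ⟨t, ht, hxt⟩ := hex
  refine ⟨⟨t, ht.1, hxt⟩, ?_⟩
  calc sInf {t : ℝ | 0 ≤ t ∧ x t = 0} ≤ t :=
        csInf_le ⟨0, fun s hs => hs.1⟩ ⟨ht.1, hxt⟩
    _ ≤ T := ht.2
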